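/- Let N ≥ 1 be an integer, a > -1 a real number, and κ_1 ≥ κ_2 ≥ ⋯ ≥ κ_N ≥ 0 integers. Then ∫_{(0,∞)^N} ∏_{l=1}^{N} x_l^a e^{-x_l} · det[x_j^{κ_i + N - i}]_{i,j=1}^{N} · det[x_j^{N - i}]_{i,j=1}^{N} dx = N! · ∏_{i=1}^{N} Γ(a + κ_i + N - i + 1) · ∏_{1 ≤ i < j ≤ N} (κ_i - κ_j + j - i). -/

import Mathlib

open MeasureTheory Finset

noncomputable section

/-- The positive orthant in `ℝ^N`. -/
def posOrth (N : ℕ) : Set (Fin N → ℝ) := {x | ∀ i, 0 < x i}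

set_option maxHeartbeats 1000000

lemma aux_eq (a : ℝ) (n : ℕ) : Set.EqOn (fun x : ℝ => x ^ a * Real.exp (-x) * x ^ n)
    (fun x : ℝ => Real.exp (-x) * x ^ (a + n + 1 - 1)) (Set.Ioi 0) := by
  intro x hx
  have hx : (0:ℝ) < x := hx
  simp only []
  rw [add_sub_cancel_right, Real.rpow_add hx, Real.rpow_natCast]
  ring

lemma gamma_int (a : ℝ) (ha : -1 < a) (n : ℕ) :
    IntegrableOn (fun x : ℝ => x ^ a * Real.exp (-x) * x ^ n) (Set.Ioi 0) := by
  have h : (0:ℝ) < a + n + 1 := by linarith [Nat.cast_nonneg (α := ℝ) n]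
  exact (Real.GammaIntegral_convergent h).congr_fun (aux_eq a n).symm measurableSet_Ioi

lemma gamma_val (a : ℝ) (ha : -1 < a) (n : ℕ) :
    ∫ x in Set.Ioi (0:ℝ), x ^ a * Real.exp (-x) * x ^ n = Real.Gamma (a + n + 1) := by
  have h : (0:ℝ) < a + n + 1 := by linarith [Nat.cast_nonneg (α := ℝ) n]
  rw [setIntegral_congr_fun measurableSet_Ioi (aux_eq a n), ← Real.Gamma_eq_integral h]

lemma gamma_asc (b : ℝ) (hb : 0 < b) (m : ℕ) :
    Real.Gamma (b + m) = Real.Gamma b * ∏ t ∈ Finset.range m, (b + t) := by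
  induction m with
  | zero => simp
  | succ m ih =>
    have : b + (m + 1 : ℕ) = (b + m) + 1 := by push_cast; ring
    rw [this, Real.Gamma_add_one (by positivity), ih, Finset.prod_range_succ]
    ring

def ascPoly (k : ℕ) : Polynomial ℝ := ∏ t ∈ Finset.range k, (Polynomial.X + Polynomial.C (t:ℝ))

lemma ascPoly_monic (k : ℕ) : (ascPoly k).Monic :=
  Polynomial.monic_prod_of_monic _ _ fun t _ => Polynomial.monic_X_add_C _

lemma ascPoly_natDegree (k : ℕ) : (ascPoly k).natDegree = k := by
  rw [ascPoly, Polynomial.natDegree_prod _ _ fun t _ => (Polynomial.monic_X_add_C _).ne_zero]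
  simp only [Polynomial.natDegree_X_add_C, Finset.sum_const, Finset.card_range, smul_eq_mul,
    mul_one]

lemma ascPoly_eval (k : ℕ) (x : ℝ) : (ascPoly k).eval x = ∏ t ∈ Finset.range k, (x + t) := by
  rw [ascPoly, Polynomial.eval_prod]
  simp

lemma pair_prod_reindex (N : ℕ) (f : Fin N → Fin N → ℝ) :
    (∏ i : Fin N, ∏ j ∈ Finset.Ioi i, f (Fin.rev j) (Fin.rev i)) =
      ∏ i : Fin N, ∏ j : Fin N, if i < j then f i j else 1 := by
  have key : ∀ g : Fin N → Fin N → ℝ,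
      (∏ i : Fin N, ∏ j ∈ Finset.Ioi i, g i j) =
        ∏ p : Fin N × Fin N, if p.1 < p.2 then g p.1 p.2 else 1 := by
    intro g
    rw [Fintype.prod_prod_type]
    refine Finset.prod_congr rfl fun i _ => ?_
    rw [← Finset.prod_filter]
    refine (Finset.prod_congr ?_ fun j _ => rfl).symm
    ext j
    simp
  rw [key fun i j => f (Fin.rev j) (Fin.rev i)]
  have step : (∏ p : Fin N × Fin N, if p.1 < p.2 then f (Fin.rev p.2) (Fin.rev p.1) else 1) =
      ∏ p : Fin N × Fin N, if p.1 < p.2 then f p.1 p.2 else 1 := by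
    refine (Equiv.prod_comp ((Equiv.prodComm _ _).trans
      (Fin.revPerm.prodCongr Fin.revPerm)) _).symm.trans ?_
    refine Finset.prod_congr rfl fun p _ => ?_
    simp [Prod.map, Fin.rev_lt_rev]
  rw [step, Fintype.prod_prod_type]

lemma det_gamma (N : ℕ) (c : Fin N → ℝ) (hc : ∀ i, 0 < c i) :
    Matrix.det (Matrix.of fun i k : Fin N => Real.Gamma (c i + ((N - 1 - (k:ℕ) : ℕ) : ℝ))) =
      (∏ i, Real.Gamma (c i)) *
      ∏ i : Fin N, ∏ j : Fin N, if i < j then (c i - c j) else 1 := by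
  have h1 : (Matrix.of fun i k : Fin N => Real.Gamma (c i + ((N - 1 - (k:ℕ) : ℕ) : ℝ))) =
      Matrix.of fun i k : Fin N =>
        Real.Gamma (c i) * (ascPoly (N - 1 - (k:ℕ))).eval (c i) := by
    ext i k
    simp only [Matrix.of_apply]
    rw [gamma_asc (c i) (hc i), ascPoly_eval]
  rw [h1, Matrix.det_mul_column (A := fun i k : Fin N => (ascPoly (N - 1 - (k:ℕ))).eval (c i))]
  congr 1
  have h2 : (fun i k : Fin N => (ascPoly (N - 1 - (k:ℕ))).eval (c i)) =
      (Matrix.of fun i k : Fin N =>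
        (ascPoly (k:ℕ)).eval (c (Fin.rev i))).submatrix ⇑Fin.revPerm ⇑Fin.revPerm := by
    funext i k
    simp only [Matrix.submatrix_apply, Matrix.of_apply, Fin.revPerm_apply, Fin.rev_rev]
    congr 2
    rw [Fin.val_rev]
    omega
  rw [h2, Matrix.det_submatrix_equiv_self,
    ← Matrix.det_eval_matrixOfPolynomials_eq_det_vandermonde (fun i => c (Fin.rev i))
      (fun k => ascPoly (k:ℕ)) (fun k => ascPoly_natDegree _) (fun k => ascPoly_monic _),
    Matrix.det_vandermonde]
  exact pair_prod_reindex N (fun i j => c i - c j)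

lemma posOrth_eq (N : ℕ) : posOrth N = Set.pi Set.univ (fun _ : Fin N => Set.Ioi (0:ℝ)) := by
  ext x; simp [posOrth, Set.mem_pi]

lemma posOrth_meas (N : ℕ) : MeasurableSet (posOrth N) := by
  rw [posOrth_eq]; exact MeasurableSet.univ_pi fun _ => measurableSet_Ioi

lemma indicator_prod (N : ℕ) (h : Fin N → ℝ → ℝ) :
    Set.indicator (posOrth N) (fun x : Fin N → ℝ => ∏ j, h j (x j)) =
      fun x => ∏ j, Set.indicator (Set.Ioi (0:ℝ)) (h j) (x j) := by
  funext x
  by_cases hx : x ∈ posOrth N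
  · rw [Set.indicator_of_mem hx]
    exact Finset.prod_congr rfl fun j _ => (Set.indicator_of_mem (hx j) _).symm
  · rw [Set.indicator_of_notMem hx]
    simp only [posOrth, Set.mem_setOf_eq, not_forall] at hx
    obtain ⟨j, hj⟩ := hx
    refine (Finset.prod_eq_zero (Finset.mem_univ j) ?_).symm
    exact Set.indicator_of_notMem (by simpa using hj) _

lemma prod_integrable (N : ℕ) (a : ℝ) (ha : -1 < a) (n : Fin N → ℕ) :
    IntegrableOn (fun x : Fin N → ℝ =>
      ∏ j, (x j ^ a * Real.exp (-x j) * x j ^ n j)) (posOrth N) := by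
  rw [← integrable_indicator_iff (posOrth_meas N),
    indicator_prod N (fun j x => x ^ a * Real.exp (-x) * x ^ n j)]
  exact Integrable.fintype_prod (𝕜 := ℝ)
    fun j => (integrable_indicator_iff measurableSet_Ioi).2 (gamma_int a ha (n j))

lemma prod_integral (N : ℕ) (a : ℝ) (ha : -1 < a) (n : Fin N → ℕ) :
    ∫ x in posOrth N, ∏ j, (x j ^ a * Real.exp (-x j) * x j ^ n j) =
      ∏ j, Real.Gamma (a + n j + 1) := by
  rw [← integral_indicator (posOrth_meas N),
    indicator_prod N (fun j x => x ^ a * Real.exp (-x) * x ^ n j)]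
  beta_reduce
  rw [volume_pi, integral_fintype_prod_eq_prod
      (fun j => Set.indicator (Set.Ioi (0:ℝ)) (fun x => x ^ a * Real.exp (-x) * x ^ n j))]
  exact Finset.prod_congr rfl fun j _ => by
    rw [integral_indicator measurableSet_Ioi, gamma_val a ha (n j)]

lemma sign_sq (σ : Equiv.Perm (Fin N)) :
    ((Equiv.Perm.sign σ : ℤ) : ℝ) * ((Equiv.Perm.sign σ : ℤ) : ℝ) = 1 := by
  rw [← Int.cast_mul, ← Units.val_mul, Int.units_mul_self, Units.val_one, Int.cast_one]

lemma det_row_form (N : ℕ) (f : Fin N → Fin N → ℝ) :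
    (∑ π : Equiv.Perm (Fin N), ((Equiv.Perm.sign π : ℤ) : ℝ) * ∏ j, f j (π j)) =
      (Matrix.of f).det := by
  rw [← Matrix.det_transpose, Matrix.det_apply]
  refine Finset.sum_congr rfl fun π _ => ?_
  rw [Units.smul_def, zsmul_eq_mul]
  simp [Matrix.transpose_apply]

lemma sum_perm_det (N : ℕ) (f : Fin N → Fin N → ℝ) :
    (∑ σ : Equiv.Perm (Fin N), ∑ τ : Equiv.Perm (Fin N),
      (((Equiv.Perm.sign σ : ℤ) : ℝ) * ((Equiv.Perm.sign τ : ℤ) : ℝ)) * ∏ j, f (σ j) (τ j)) =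
      (N.factorial : ℝ) * (Matrix.of f).det := by
  have inner : ∀ σ : Equiv.Perm (Fin N),
      (∑ τ : Equiv.Perm (Fin N),
        (((Equiv.Perm.sign σ : ℤ) : ℝ) * ((Equiv.Perm.sign τ : ℤ) : ℝ)) * ∏ j, f (σ j) (τ j)) =
      (Matrix.of f).det := by
    intro σ
    rw [← det_row_form N f]
    refine (Fintype.sum_bijective (· * σ) (Group.mulRight_bijective σ) _ _ fun π => ?_).symm
    have h1 : ∀ j, f ((σ : Equiv.Perm (Fin N)) j) ((π * σ) j) = f (σ j) (π (σ j)) := by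
      intro j; simp [Equiv.Perm.mul_apply]
    rw [Finset.prod_congr rfl fun j _ => h1 j, ← Equiv.prod_comp σ (fun j => f j (π j))]
    rw [map_mul]
    push_cast [Units.val_mul]
    rw [show ((Equiv.Perm.sign σ : ℤ) : ℝ) * (((Equiv.Perm.sign π : ℤ) : ℝ) *
        ((Equiv.Perm.sign σ : ℤ) : ℝ)) = ((Equiv.Perm.sign π : ℤ) : ℝ) *
        (((Equiv.Perm.sign σ : ℤ) : ℝ) * ((Equiv.Perm.sign σ : ℤ) : ℝ)) from by ring,
      sign_sq, mul_one]
  rw [Finset.sum_congr rfl fun σ _ => inner σ, Finset.sum_const, Finset.card_univ,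
    Fintype.card_perm, Fintype.card_fin, nsmul_eq_mul]

lemma main_integral (N : ℕ) (a : ℝ) (ha : -1 < a) (m r : Fin N → ℕ) :
    (∫ x in posOrth N,
        (∏ l, x l ^ a * Real.exp (-x l)) *
          Matrix.det (Matrix.of fun i j : Fin N => x j ^ m i) *
          Matrix.det (Matrix.of fun i j : Fin N => x j ^ r i)) =
      (N.factorial : ℝ) *
        (Matrix.of fun i k : Fin N =>
          Real.Gamma (a + (m i : ℝ) + (r k : ℝ) + 1)).det := by
  have expand : ∀ x : Fin N → ℝ,
      (∏ l, x l ^ a * Real.exp (-x l)) *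
        Matrix.det (Matrix.of fun i j : Fin N => x j ^ m i) *
        Matrix.det (Matrix.of fun i j : Fin N => x j ^ r i) =
      ∑ σ : Equiv.Perm (Fin N), ∑ τ : Equiv.Perm (Fin N),
        (((Equiv.Perm.sign σ : ℤ) : ℝ) * ((Equiv.Perm.sign τ : ℤ) : ℝ)) *
          ∏ j, (x j ^ a * Real.exp (-x j) * x j ^ (m (σ j) + r (τ j))) := by
    intro x
    rw [Matrix.det_apply, Matrix.det_apply, Finset.mul_sum, Finset.sum_comm]
    refine Finset.sum_congr rfl fun τ _ => ?_
    rw [Finset.mul_sum, Finset.sum_mul]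
    refine Finset.sum_congr rfl fun σ _ => ?_
    simp only [Matrix.of_apply, Units.smul_def, zsmul_eq_mul]
    simp_rw [pow_add]
    simp only [Finset.prod_mul_distrib]
    ring
  have int1 : ∀ σ τ : Equiv.Perm (Fin N),
      IntegrableOn (fun x : Fin N → ℝ =>
        (((Equiv.Perm.sign σ : ℤ) : ℝ) * ((Equiv.Perm.sign τ : ℤ) : ℝ)) *
          ∏ j, (x j ^ a * Real.exp (-x j) * x j ^ (m (σ j) + r (τ j)))) (posOrth N) :=
    fun σ τ => (prod_integrable N a ha fun j => m (σ j) + r (τ j)).const_mul _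
  calc (∫ x in posOrth N,
        (∏ l, x l ^ a * Real.exp (-x l)) *
          Matrix.det (Matrix.of fun i j : Fin N => x j ^ m i) *
          Matrix.det (Matrix.of fun i j : Fin N => x j ^ r i))
      = ∑ σ : Equiv.Perm (Fin N), ∑ τ : Equiv.Perm (Fin N),
          (((Equiv.Perm.sign σ : ℤ) : ℝ) * ((Equiv.Perm.sign τ : ℤ) : ℝ)) *
            ∏ j, Real.Gamma (a + (m (σ j) + r (τ j) : ℕ) + 1) := by
        simp only [expand]
        rw [integral_finset_sum _ fun σ _ => integrable_finset_sum _ fun τ _ => int1 σ τ]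
        refine Finset.sum_congr rfl fun σ _ => ?_
        rw [integral_finset_sum _ fun τ _ => int1 σ τ]
        refine Finset.sum_congr rfl fun τ _ => ?_
        rw [integral_const_mul, prod_integral N a ha]
    _ = ∑ σ : Equiv.Perm (Fin N), ∑ τ : Equiv.Perm (Fin N),
          (((Equiv.Perm.sign σ : ℤ) : ℝ) * ((Equiv.Perm.sign τ : ℤ) : ℝ)) *
            ∏ j, (fun i k : Fin N => Real.Gamma (a + (m i : ℝ) + (r k : ℝ) + 1)) (σ j) (τ j) := by
        refine Finset.sum_congr rfl fun σ _ => Finset.sum_congr rfl fun τ _ => ?_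
        congr 1
        refine Finset.prod_congr rfl fun j _ => ?_
        push_cast
        ring_nf
    _ = (N.factorial : ℝ) * (Matrix.of fun i k : Fin N =>
          Real.Gamma (a + (m i : ℝ) + (r k : ℝ) + 1)).det := by
        exact sum_perm_det N (fun i k => Real.Gamma (a + (m i : ℝ) + (r k : ℝ) + 1))

/-- The Laguerre integral of the product of the two alternants
`det[x_j^{κ_i + N - i}]` and `det[x_j^{N - i}]` (with `i, j` running over `Fin N`,
1-based value `i+1`, so `N - i` reads `N - 1 - ↑i`). -/
theorem stmt13 (N : ℕ) (hN : 1 ≤ N) (a : ℝ) (ha : -1 < a) (κ : Fin N → ℕ)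
    (hκ : ∀ i j : Fin N, i ≤ j → κ j ≤ κ i) :
    (∫ x in posOrth N,
        (∏ l, x l ^ a * Real.exp (-x l)) *
          Matrix.det (Matrix.of fun i j : Fin N => x j ^ (κ i + (N - 1 - (i : ℕ)))) *
          Matrix.det (Matrix.of fun i j : Fin N => x j ^ (N - 1 - (i : ℕ)))) =
      (N.factorial : ℝ) *
        (∏ i : Fin N, Real.Gamma (a + κ i + ((N - 1 - (i : ℕ) : ℕ) : ℝ) + 1)) *
        ∏ i : Fin N, ∏ j : Fin N, if i < j then
          ((κ i : ℝ) - κ j + (j : ℕ) - (i : ℕ)) else 1 := by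
  have hcast : ∀ i : Fin N, ((N - 1 - (i:ℕ) : ℕ) : ℝ) = (N:ℝ) - 1 - (i:ℕ) := by
    intro i
    have hi := i.isLt
    rw [Nat.cast_sub (by omega), Nat.cast_sub (by omega)]
    simp
  rw [main_integral N a ha (fun i => κ i + (N - 1 - (i:ℕ))) (fun i => N - 1 - (i:ℕ))]
  have hc : ∀ i : Fin N, 0 < a + (((κ i + (N - 1 - (i:ℕ))) : ℕ) : ℝ) + 1 := by
    intro i
    have := Nat.cast_nonneg (α := ℝ) (κ i + (N - 1 - (i:ℕ)))
    linarith
  have hM : (Matrix.of fun i k : Fin N =>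
      Real.Gamma (a + (((κ i + (N - 1 - (i:ℕ))) : ℕ) : ℝ) + (((N - 1 - (k:ℕ)) : ℕ) : ℝ) + 1)) =
      Matrix.of fun i k : Fin N =>
        Real.Gamma ((a + (((κ i + (N - 1 - (i:ℕ))) : ℕ) : ℝ) + 1) +
          (((N - 1 - (k:ℕ)) : ℕ) : ℝ)) := by
    ext i k
    simp only [Matrix.of_apply]
    congr 1
    ring
  rw [hM, det_gamma N (fun i => a + (((κ i + (N - 1 - (i:ℕ))) : ℕ) : ℝ) + 1) hc, ← mul_assoc]
  congr 1
  · congr 1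
    refine Finset.prod_congr rfl fun i _ => ?_
    congr 1
    push_cast
    ring
  · refine Finset.prod_congr rfl fun i _ => Finset.prod_congr rfl fun j _ => ?_
    by_cases hij : i < j
    · simp only [hij, if_true]
      push_cast
      rw [hcast i, hcast j]
      ring
    · simp [hij]

end
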